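/- Let G₁, …, G_L be K×K Hermitian positive semidefinite complex matrices with each Gₗ ≺ I_K (Loewner order). Then the block linear system requiring, for every l ∈ {1,…,L}, Cₗ + Σ_{j ≠ l} Gⱼ Cⱼ = I_K has a unique solution (C₁, …, C_L) of K×K complex matrices. -/

import Mathlib

open Matrix Finset
open scoped ComplexOrder

private lemma comm_inv {K : ℕ} {A B : Matrix (Fin K) (Fin K) ℂ}
    (h : A * B = B * A) (hB : IsUnit B.det) : A * B⁻¹ = B⁻¹ * A := by
  have h1 : B⁻¹ * B = 1 := Matrix.nonsing_inv_mul B hB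
  have h2 : B * B⁻¹ = 1 := Matrix.mul_nonsing_inv B hB
  calc A * B⁻¹ = B⁻¹ * B * (A * B⁻¹) := by rw [h1, one_mul]
    _ = B⁻¹ * (B * A) * B⁻¹ := by noncomm_ring
    _ = B⁻¹ * (A * B) * B⁻¹ := by rw [h]
    _ = B⁻¹ * A * (B * B⁻¹) := by noncomm_ring
    _ = B⁻¹ * A := by rw [h2, mul_one]

open scoped MatrixOrder in
private lemma term_psd {K : ℕ} {G : Matrix (Fin K) (Fin K) ℂ}
    (hG : G.PosSemidef) (hlt : ((1 : Matrix (Fin K) (Fin K) ℂ) - G).PosDef) :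
    (G * (1 - G)⁻¹).PosSemidef := by
  set B : Matrix (Fin K) (Fin K) ℂ := 1 - G with hBdef
  have hBu : IsUnit B.det := (Matrix.isUnit_iff_isUnit_det _).1 hlt.isUnit
  have hinv : B⁻¹ * B = 1 := Matrix.nonsing_inv_mul B hBu
  have hinv' : B * B⁻¹ = 1 := Matrix.mul_nonsing_inv B hBu
  -- B * G is PosSemidef : B * G = Sᴴ * B * S with S = sqrt of G
  have hBG : (B * G).PosSemidef := by
    have hS : (CFC.sqrt G).PosSemidef := (CFC.sqrt_nonneg G).posSemidef
    have hSq : CFC.sqrt G * CFC.sqrt G = G := CFC.sqrt_mul_sqrt_self G hG.nonneg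
    have key : (CFC.sqrt G)ᴴ * B * CFC.sqrt G = B * G := by
      rw [hS.isHermitian.eq, hBdef]
      have hmid : CFC.sqrt G * G * CFC.sqrt G = G * G := by
        have h0 : CFC.sqrt G * (CFC.sqrt G * CFC.sqrt G) * CFC.sqrt G
            = (CFC.sqrt G * CFC.sqrt G) * (CFC.sqrt G * CFC.sqrt G) := by noncomm_ring
        rwa [hSq] at h0
      calc CFC.sqrt G * (1 - G) * CFC.sqrt G
          = CFC.sqrt G * CFC.sqrt G - CFC.sqrt G * G * CFC.sqrt G := by noncomm_ring
        _ = G - G * G := by rw [hSq, hmid]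
        _ = (1 - G) * G := by noncomm_ring
    rw [← key]
    exact hlt.posSemidef.conjTranspose_mul_mul_same (CFC.sqrt G)
  -- G * B⁻¹ = (B⁻¹)ᴴ * (B * G) * B⁻¹
  have hBinvH : (B⁻¹).IsHermitian := hlt.isHermitian.inv
  have key2 : (B⁻¹)ᴴ * (B * G) * B⁻¹ = G * B⁻¹ := by
    rw [hBinvH.eq]
    calc B⁻¹ * (B * G) * B⁻¹ = (B⁻¹ * B) * (G * B⁻¹) := by noncomm_ring
      _ = G * B⁻¹ := by rw [hinv, one_mul]
  rw [← key2]
  exact hBG.conjTranspose_mul_mul_same B⁻¹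

set_option maxHeartbeats 1000000 in
theorem stmt_2 (L K : ℕ) (G : Fin L → Matrix (Fin K) (Fin K) ℂ)
    (hGh : ∀ l, (G l).IsHermitian) (hGpsd : ∀ l, (G l).PosSemidef)
    (hGlt : ∀ l, ((1 : Matrix (Fin K) (Fin K) ℂ) - G l).PosDef) :
    ∃! C : Fin L → Matrix (Fin K) (Fin K) ℂ,
      ∀ l, C l + ∑ j ∈ univ.erase l, G j * C j = 1 := by
  set B : Fin L → Matrix (Fin K) (Fin K) ℂ := fun l => 1 - G l with hBdef
  have hBu : ∀ l, IsUnit (B l).det :=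
    fun l => (Matrix.isUnit_iff_isUnit_det _).1 (hGlt l).isUnit
  have hBinv : ∀ l, (B l)⁻¹ * B l = 1 := fun l => Matrix.nonsing_inv_mul _ (hBu l)
  have hBinv' : ∀ l, B l * (B l)⁻¹ = 1 := fun l => Matrix.mul_nonsing_inv _ (hBu l)
  set M : Matrix (Fin K) (Fin K) ℂ := ∑ j, G j * (B j)⁻¹ with hMdef
  have hMpsd : M.PosSemidef := by
    rw [hMdef]
    apply Finset.sum_induction _ Matrix.PosSemidef
      (fun a b ha hb => ha.add hb) Matrix.PosSemidef.zero
    intro j _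
    exact term_psd (hGpsd j) (hGlt j)
  set T : Matrix (Fin K) (Fin K) ℂ := 1 + M with hTdef
  have hTpd : T.PosDef := Matrix.PosDef.add_posSemidef Matrix.PosDef.one hMpsd
  have hTu : IsUnit T.det := (Matrix.isUnit_iff_isUnit_det _).1 hTpd.isUnit
  have hTinv : T⁻¹ * T = 1 := Matrix.nonsing_inv_mul _ hTu
  have hTinv' : T * T⁻¹ = 1 := Matrix.mul_nonsing_inv _ hTu
  set S : Matrix (Fin K) (Fin K) ℂ := T⁻¹ * M with hSdef
  have hcomm : M * T⁻¹ = T⁻¹ * M := by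
    apply comm_inv _ hTu
    rw [hTdef]; noncomm_ring
  set C : Fin L → Matrix (Fin K) (Fin K) ℂ := fun l => (B l)⁻¹ * (1 - S) with hCdef
  -- key computation : M * (1 - S) = S
  have hkey : M * (1 - S) = S := by
    have h2 : T * (M - T⁻¹ * (M * M)) = M := by
      have e1 : T * (M - T⁻¹ * (M * M)) = T * M - (T * T⁻¹) * (M * M) := by noncomm_ring
      rw [e1, hTinv', one_mul, hTdef]
      noncomm_ring
    have h4 : M - T⁻¹ * (M * M) = S := by
      calc M - T⁻¹ * (M * M) = T⁻¹ * T * (M - T⁻¹ * (M * M)) := by rw [hTinv, one_mul]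
        _ = T⁻¹ * (T * (M - T⁻¹ * (M * M))) := by rw [mul_assoc]
        _ = T⁻¹ * M := by rw [h2]
        _ = S := hSdef.symm
    have h1 : M * (1 - S) = M - T⁻¹ * (M * M) := by
      calc M * (1 - S) = M - M * (T⁻¹ * M) := by rw [hSdef]; noncomm_ring
        _ = M - M * T⁻¹ * M := by rw [mul_assoc]
        _ = M - T⁻¹ * M * M := by rw [hcomm]
        _ = M - T⁻¹ * (M * M) := by rw [mul_assoc]
    rw [h1, h4]
  -- sum over all j of G j * C j equals S
  have hsum : ∀ D : Fin L → Matrix (Fin K) (Fin K) ℂ,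
      (∀ l, D l = (B l)⁻¹ * (1 - S)) → ∑ j, G j * D j = S := by
    intro D hD
    calc ∑ j, G j * D j = (∑ j, G j * (B j)⁻¹) * (1 - S) := by
          rw [Finset.sum_mul]
          exact Finset.sum_congr rfl fun j _ => by rw [hD j, mul_assoc]
      _ = S := by rw [← hMdef, hkey]
  refine ⟨C, ?_, ?_⟩
  · intro l
    have hS : ∑ j, G j * C j = S := hsum C fun l => rfl
    rw [Finset.sum_erase_eq_sub (Finset.mem_univ l), hS]
    have hBC : B l * C l = 1 - S := by
      rw [hCdef, ← mul_assoc, hBinv' l, one_mul]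
    have : C l - G l * C l = 1 - S := by
      calc C l - G l * C l = (1 - G l) * C l := by noncomm_ring
        _ = 1 - S := hBC
    calc C l + (S - G l * C l) = (C l - G l * C l) + S := by abel
      _ = 1 := by rw [this]; abel
  · intro D hD
    set S' : Matrix (Fin K) (Fin K) ℂ := ∑ j, G j * D j with hS'def
    have hDl : ∀ l, B l * D l = 1 - S' := by
      intro l
      have h := hD l
      rw [Finset.sum_erase_eq_sub (Finset.mem_univ l), ← hS'def] at h
      have : (1 - G l) * D l = 1 - S' := by
        rw [sub_mul, one_mul, sub_eq_iff_eq_add, sub_add_eq_add_sub, eq_sub_iff_add_eq]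
        calc D l + S' = D l + (S' - G l * D l) + G l * D l := by abel
          _ = 1 + G l * D l := by rw [h]
      rw [hBdef]; exact this
    have hDl' : ∀ l, D l = (B l)⁻¹ * (1 - S') := by
      intro l
      rw [← hDl l, ← mul_assoc, hBinv l, one_mul]
    have hMS' : M * (1 - S') = S' := by
      rw [hS'def]
      calc M * (1 - S') = (∑ j, G j * (B j)⁻¹) * (1 - S') := by rw [hMdef]
        _ = ∑ j, G j * D j := by
            rw [Finset.sum_mul]
            exact Finset.sum_congr rfl fun j _ => by rw [hDl' j, mul_assoc, hS'def]
    have hexp : M - M * S' = S' := by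
      calc M - M * S' = M * (1 - S') := by noncomm_ring
        _ = S' := hMS'
    have hT : T * S' = M := by
      rw [hTdef]
      calc (1 + M) * S' = S' + M * S' := by noncomm_ring
        _ = (M - M * S') + M * S' := by rw [hexp]
        _ = M := by abel
    have hS'eq : S' = S := by
      calc S' = T⁻¹ * T * S' := by rw [hTinv, one_mul]
        _ = T⁻¹ * (T * S') := by rw [mul_assoc]
        _ = T⁻¹ * M := by rw [hT]
        _ = S := hSdef.symm
    funext l
    rw [hDl' l, hS'eq, hCdef]
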